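/- (Independence of the contact condition from the choice of lift.) Let n : I → ℂ³ be a differentiable curve with ⟨n(t), n(t)⟩_ℂ = 0 for all t, let λ : I → ℂ be a differentiable nonvanishing function, and set m(t) = λ(t)·n(t). Then for every t, ⟨m′(t), i·m(t)⟩ = |λ(t)|² · ⟨n′(t), i·n(t)⟩. In particular ⟨m′(t), i·m(t)⟩ = 0 if and only if ⟨n′(t), i·n(t)⟩ = 0, so the condition ⟨n′, i n⟩ = 0 depends only on the projectivized curve and not on the choice of lift into the null cone. -/

import Mathlib

/-- Independence of the contact condition from the choice of lift: if
`n(t) = (n₀(t), n₁(t), n₂(t))` is a differentiable curve in `ℂ³` with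
`⟨n(t), n(t)⟩_ℂ = −n₀n̄₀ + n₁n̄₁ + n₂n̄₂ = 0` for all `t`, `lam : I → ℂ` is a
differentiable nonvanishing function, and `m(t) = lam(t)·n(t)`, then
`⟨m′(t), i·m(t)⟩ = |lam(t)|² ⟨n′(t), i·n(t)⟩`, where
`⟨n′, i n⟩ = Re(−i(n̄₁n₁′ + n̄₂n₂′ − n̄₀n₀′))`.  In particular
`⟨m′, i m⟩ = 0 ↔ ⟨n′, i n⟩ = 0`, so the contact condition depends only on the
projectivized curve, not on the lift into the null cone. -/
theorem contact_condition_lift_independent (n₀ n₁ n₂ : ℝ → ℂ) (lam : ℝ → ℂ)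
    (hd₀ : Differentiable ℝ n₀) (hd₁ : Differentiable ℝ n₁)
    (hd₂ : Differentiable ℝ n₂) (hdl : Differentiable ℝ lam)
    (hlam : ∀ t, lam t ≠ 0)
    (hnull : ∀ t, -(n₀ t * (starRingEnd ℂ) (n₀ t)) +
      n₁ t * (starRingEnd ℂ) (n₁ t) + n₂ t * (starRingEnd ℂ) (n₂ t) = 0) :
    ∀ t : ℝ,
      ((-Complex.I * ((starRingEnd ℂ) (lam t * n₁ t) *
            deriv (fun s => lam s * n₁ s) t +
          (starRingEnd ℂ) (lam t * n₂ t) * deriv (fun s => lam s * n₂ s) t -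
          (starRingEnd ℂ) (lam t * n₀ t) *
            deriv (fun s => lam s * n₀ s) t)).re =
        ‖lam t‖ ^ 2 *
          (-Complex.I * ((starRingEnd ℂ) (n₁ t) * deriv n₁ t +
            (starRingEnd ℂ) (n₂ t) * deriv n₂ t -
            (starRingEnd ℂ) (n₀ t) * deriv n₀ t)).re) ∧
      ((-Complex.I * ((starRingEnd ℂ) (lam t * n₁ t) *
            deriv (fun s => lam s * n₁ s) t +
          (starRingEnd ℂ) (lam t * n₂ t) * deriv (fun s => lam s * n₂ s) t -
          (starRingEnd ℂ) (lam t * n₀ t) *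
            deriv (fun s => lam s * n₀ s) t)).re = 0 ↔
        (-Complex.I * ((starRingEnd ℂ) (n₁ t) * deriv n₁ t +
          (starRingEnd ℂ) (n₂ t) * deriv n₂ t -
          (starRingEnd ℂ) (n₀ t) * deriv n₀ t)).re = 0) := by

  intro t
  have h0 : deriv (fun s => lam s * n₀ s) t = deriv lam t * n₀ t + lam t * deriv n₀ t :=
    deriv_fun_mul (hdl t) (hd₀ t)
  have h1 : deriv (fun s => lam s * n₁ s) t = deriv lam t * n₁ t + lam t * deriv n₁ t :=
    deriv_fun_mul (hdl t) (hd₁ t)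
  have h2 : deriv (fun s => lam s * n₂ s) t = deriv lam t * n₂ t + lam t * deriv n₂ t :=
    deriv_fun_mul (hdl t) (hd₂ t)
  have hn : (starRingEnd ℂ) (n₁ t) * n₁ t + (starRingEnd ℂ) (n₂ t) * n₂ t -
      (starRingEnd ℂ) (n₀ t) * n₀ t = 0 := by
    linear_combination hnull t
  have ha : (starRingEnd ℂ) (lam t) * lam t = ((‖lam t‖ ^ 2 : ℝ) : ℂ) := by
    rw [mul_comm, Complex.mul_conj]
    norm_cast
    exact (Complex.sq_norm _).symm
  set N : ℂ := (starRingEnd ℂ) (n₁ t) * deriv n₁ t + (starRingEnd ℂ) (n₂ t) * deriv n₂ t -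
      (starRingEnd ℂ) (n₀ t) * deriv n₀ t with hN
  have key : -Complex.I * ((starRingEnd ℂ) (lam t * n₁ t) *
        (deriv lam t * n₁ t + lam t * deriv n₁ t) +
      (starRingEnd ℂ) (lam t * n₂ t) * (deriv lam t * n₂ t + lam t * deriv n₂ t) -
      (starRingEnd ℂ) (lam t * n₀ t) * (deriv lam t * n₀ t + lam t * deriv n₀ t)) =
      ((‖lam t‖ ^ 2 : ℝ) : ℂ) * (-Complex.I * N) := by
    simp only [map_mul, hN]
    linear_combination (-Complex.I * N) * ha +
      (-Complex.I * (starRingEnd ℂ) (lam t) * deriv lam t) * hn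
  rw [h0, h1, h2, key, Complex.re_ofReal_mul]
  refine ⟨rfl, ?_⟩
  have hpos : (0:ℝ) < ‖lam t‖ ^ 2 := by
    have := norm_pos_iff.mpr (hlam t); positivity
  constructor
  · intro h
    exact (mul_eq_zero.mp h).resolve_left (ne_of_gt hpos)
  · intro h; rw [h, mul_zero]
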